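/- Let (Ω, ℱ, μ) be a probability space and 𝒢 ⊆ ℱ a sub-σ-algebra. Let x : Ω → ℝⁿ be square-integrable, K an m×n real matrix, and M a symmetric positive semidefinite m×m real matrix. Then for every 𝒢-measurable square-integrable u : Ω → ℝᵐ, E[(u − K x)ᵀ M (u − K x)] ≥ E[(K(x − E[x | 𝒢]))ᵀ M (K(x − E[x | 𝒢]))], and equality holds when u = K · E[x | 𝒢] (almost everywhere), where E[x | 𝒢] denotes the conditional expectation of x given 𝒢. -/

import Mathlib

open Matrix MeasureTheory

section Aux

variable {Ω : Type*} {mG mΩ : MeasurableSpace Ω} {μ : Measure Ω} [IsProbabilityMeasure μ]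

/-- The conditional expectation of an `L²` real function is in `L²`. -/
lemma aux_memLp2_condexp (hmG : mG ≤ mΩ) {f : Ω → ℝ} (hf : MemLp f 2 μ) :
    MemLp (μ[f|mG]) 2 μ := by
  have h : (condExpL2 ℝ ℝ hmG (hf.toLp f) : Ω →₂[μ] ℝ) =ᵐ[μ] μ[f|mG] := by
    refine ae_eq_condExp_of_forall_setIntegral_eq hmG (hf.integrable one_le_two)
      (fun s _ _ => ((Lp.memLp _).integrable one_le_two).integrableOn)
      (fun s hs hμs => ?_) ?_
    · rw [integral_condExpL2_eq hmG (hf.toLp f) hs hμs.ne]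
      exact setIntegral_congr_ae (hmG s hs) ((hf.coeFn_toLp).mono fun ω hω _ => hω)
    · exact aestronglyMeasurable_condExpL2 hmG _
  exact (Lp.memLp _).ae_eq h

/-- Componentwise conditional expectation. -/
lemma aux_condexp_apply (hmG : mG ≤ mΩ) {n : ℕ} {x : Ω → Fin n → ℝ}
    (hx : Integrable x μ) (k : Fin n) :
    (fun ω => (μ[x|mG]) ω k) =ᵐ[μ] μ[fun ω => x ω k|mG] := by
  have hL : ∀ (f : Ω → Fin n → ℝ), (fun ω => f ω k) =
      (fun ω => (ContinuousLinearMap.proj (R := ℝ) (φ := fun _ : Fin n => ℝ) k) (f ω)) :=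
    fun f => rfl
  refine ae_eq_condExp_of_forall_setIntegral_eq hmG
    ((ContinuousLinearMap.proj (R := ℝ) (φ := fun _ : Fin n => ℝ) k).integrable_comp hx)
    (fun s _ _ => (((ContinuousLinearMap.proj (R := ℝ) (φ := fun _ : Fin n => ℝ)
      k).integrable_comp integrable_condExp).integrableOn))
    (fun s hs hμs => ?_) ?_
  · rw [hL (fun ω => (μ[x|mG]) ω), hL x,
      ContinuousLinearMap.integral_comp_comm _ integrable_condExp.integrableOn,
      ContinuousLinearMap.integral_comp_comm _ hx.integrableOn,
      setIntegral_condExp hmG hx hs]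
  · exact ((ContinuousLinearMap.proj (R := ℝ) (φ := fun _ : Fin n => ℝ)
      k).continuous.comp_stronglyMeasurable stronglyMeasurable_condExp).aestronglyMeasurable

/-- Product of two `L²` functions is integrable. -/
lemma aux_int_mul {h f : Ω → ℝ} (hh : MemLp h 2 μ) (hf : MemLp f 2 μ) :
    Integrable (fun ω => h ω * f ω) μ := by
  have := hf.smul (φ := h) hh (p := 2) (q := 2) (r := 1)
  rw [memLp_one_iff_integrable] at this
  simp only [smul_eq_mul] at this
  exact this

/-- Orthogonality: a `𝒢`-measurable `L²` function is orthogonal to `f - E[f|𝒢]`. -/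
lemma aux_orth (hmG : mG ≤ mΩ) {h f : Ω → ℝ}
    (hhm : StronglyMeasurable[mG] h) (hh : MemLp h 2 μ) (hf : MemLp f 2 μ) :
    ∫ ω, h ω * (f ω - (μ[f|mG]) ω) ∂μ = 0 := by
  have hfi : Integrable f μ := hf.integrable one_le_two
  have hcf : MemLp (μ[f|mG]) 2 μ := aux_memLp2_condexp hmG hf
  have hint1 : Integrable (fun ω => h ω * f ω) μ := aux_int_mul hh hf
  have hint2 : Integrable (fun ω => h ω * (μ[f|mG]) ω) μ := aux_int_mul hh hcf
  have key : ∫ ω, h ω * f ω ∂μ = ∫ ω, h ω * (μ[f|mG]) ω ∂μ := by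
    have h1 : ∫ ω, (μ[h * f|mG]) ω ∂μ = ∫ ω, (h * f) ω ∂μ := integral_condExp hmG
    have h2 : μ[h * f|mG] =ᵐ[μ] h * μ[f|mG] :=
      condExp_mul_of_stronglyMeasurable_left hhm hint1 hfi
    calc ∫ ω, h ω * f ω ∂μ = ∫ ω, (h * f) ω ∂μ := rfl
      _ = ∫ ω, (μ[h * f|mG]) ω ∂μ := h1.symm
      _ = ∫ ω, (h * μ[f|mG]) ω ∂μ := integral_congr_ae h2
      _ = ∫ ω, h ω * (μ[f|mG]) ω ∂μ := rfl
  have : (fun ω => h ω * (f ω - (μ[f|mG]) ω))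
      = fun ω => h ω * f ω - h ω * (μ[f|mG]) ω := by funext ω; ring
  rw [this, integral_sub hint1 hint2, key, sub_self]

lemma aux_main {n m : ℕ} (hmG : mG ≤ mΩ)
    (x : Ω → Fin n → ℝ) (hx : MemLp x 2 μ)
    (K : Matrix (Fin m) (Fin n) ℝ)
    (M : Matrix (Fin m) (Fin m) ℝ) (hM : M.PosSemidef) :
    (∀ u : Ω → Fin m → ℝ, StronglyMeasurable[mG] u → MemLp u 2 μ →
      ∫ ω, (u ω - K *ᵥ x ω) ⬝ᵥ M *ᵥ (u ω - K *ᵥ x ω) ∂μ ≥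
        ∫ ω, (K *ᵥ (x ω - (μ[x|mG]) ω)) ⬝ᵥ M *ᵥ (K *ᵥ (x ω - (μ[x|mG]) ω)) ∂μ) ∧
    (∫ ω, ((K *ᵥ (μ[x|mG]) ω) - K *ᵥ x ω) ⬝ᵥ M *ᵥ ((K *ᵥ (μ[x|mG]) ω) - K *ᵥ x ω) ∂μ =
      ∫ ω, (K *ᵥ (x ω - (μ[x|mG]) ω)) ⬝ᵥ M *ᵥ (K *ᵥ (x ω - (μ[x|mG]) ω)) ∂μ) := by
  classical
  set g : Ω → Fin n → ℝ := μ[x|mG] with hg_def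
  have hxi : Integrable x μ := hx.integrable one_le_two
  -- componentwise facts
  have hxk2 : ∀ k, MemLp (fun ω => x ω k) 2 μ := fun k =>
    (ContinuousLinearMap.proj (R := ℝ) (φ := fun _ : Fin n => ℝ) k).comp_memLp' hx
  have hcomp : ∀ k, (fun ω => g ω k) =ᵐ[μ] μ[fun ω => x ω k|mG] :=
    fun k => aux_condexp_apply hmG hxi k
  have hgk2 : ∀ k, MemLp (fun ω => g ω k) 2 μ := fun k =>
    (aux_memLp2_condexp hmG (hxk2 k)).ae_eq (hcomp k).symm
  have hg_sm : StronglyMeasurable[mG] g := stronglyMeasurable_condExp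
  -- e := K (x - g)
  set e : Ω → Fin m → ℝ := fun ω => K *ᵥ (x ω - g ω) with he_def
  have hek2 : ∀ j, MemLp (fun ω => e ω j) 2 μ := by
    intro j
    have : (fun ω => e ω j) = fun ω => ∑ k, K j k * (x ω k - g ω k) := by
      funext ω; simp [he_def, Matrix.mulVec, dotProduct]
    have h2 : (fun ω => ∑ k, K j k * (x ω k - g ω k))
        = ∑ k, fun ω => K j k * (x ω k - g ω k) := by
      funext ω; simp
    rw [this, h2]
    exact memLp_finsetSum' _ fun k _ => ((hxk2 k).sub (hgk2 k)).const_mul _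
  -- symmetry of the quadratic form
  have hMt : Mᵀ = M := by
    have := hM.1; rwa [Matrix.IsHermitian, conjTranspose_eq_transpose_of_trivial] at this
  have hsym : ∀ a b : Fin m → ℝ, a ⬝ᵥ M *ᵥ b = b ⬝ᵥ M *ᵥ a := by
    intro a b
    rw [dotProduct_mulVec, ← Matrix.mulVec_transpose, hMt, dotProduct_comm]
  constructor
  · -- inequality
    intro u hu_sm hu2
    set v : Ω → Fin m → ℝ := fun ω => u ω - K *ᵥ g ω with hv_def
    have hvk2 : ∀ i, MemLp (fun ω => v ω i) 2 μ := by
      intro i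
      have : (fun ω => v ω i) = fun ω => u ω i - ∑ k, K i k * g ω k := by
        funext ω; simp [hv_def, Matrix.mulVec, dotProduct]
      have h2 : (fun ω => ∑ k, K i k * g ω k) = ∑ k, fun ω => K i k * g ω k := by
        funext ω; simp
      rw [this]
      refine (((ContinuousLinearMap.proj (R := ℝ) (φ := fun _ : Fin m => ℝ)
        i).comp_memLp' hu2)).sub ?_
      rw [h2]
      exact memLp_finsetSum' _ fun k _ => (hgk2 k).const_mul _
    have hv_sm : StronglyMeasurable[mG] v := by
      refine hu_sm.sub ?_
      exact (Continuous.comp_stronglyMeasurable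
        (LinearMap.toContinuousLinearMap (Matrix.mulVecLin K)).continuous hg_sm)
    -- pointwise identity
    have hpt : ∀ ω, u ω - K *ᵥ x ω = v ω - e ω := by
      intro ω
      simp only [hv_def, he_def, Matrix.mulVec_sub]
      abel
    -- expansion
    have hexp : ∀ ω, (u ω - K *ᵥ x ω) ⬝ᵥ M *ᵥ (u ω - K *ᵥ x ω)
        = v ω ⬝ᵥ M *ᵥ v ω - 2 * (v ω ⬝ᵥ M *ᵥ e ω) + e ω ⬝ᵥ M *ᵥ e ω := by
      intro ω
      rw [hpt ω, sub_dotProduct, Matrix.mulVec_sub, dotProduct_sub,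
        dotProduct_sub, hsym (e ω) (v ω)]
      ring
    -- integrability of all the quadratic terms
    have hterm_int : ∀ (a b : Ω → Fin m → ℝ), (∀ i, MemLp (fun ω => a ω i) 2 μ) →
        (∀ i, MemLp (fun ω => b ω i) 2 μ) →
        Integrable (fun ω => a ω ⬝ᵥ M *ᵥ b ω) μ := by
      intro a b ha hb
      have : (fun ω => a ω ⬝ᵥ M *ᵥ b ω)
          = fun ω => ∑ i, ∑ j, a ω i * (M i j * b ω j) := by
        funext ω; simp [dotProduct, Matrix.mulVec, Finset.mul_sum]
      rw [this]
      exact integrable_finset_sum _ fun i _ => integrable_finset_sum _ fun j _ =>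
        aux_int_mul (ha i) ((hb j).const_mul _)
    have hQv_int : Integrable (fun ω => v ω ⬝ᵥ M *ᵥ v ω) μ := hterm_int v v hvk2 hvk2
    have hQe_int : Integrable (fun ω => e ω ⬝ᵥ M *ᵥ e ω) μ := hterm_int e e hek2 hek2
    have hc_int : Integrable (fun ω => v ω ⬝ᵥ M *ᵥ e ω) μ := hterm_int v e hvk2 hek2
    -- the cross term integral vanishes
    have hcross0 : ∀ i k, ∫ ω, v ω i * (x ω k - g ω k) ∂μ = 0 := by
      intro i k
      have hvi_sm : StronglyMeasurable[mG] (fun ω => v ω i) :=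
        (continuous_apply i).comp_stronglyMeasurable hv_sm
      have hcongr : (fun ω => v ω i * (x ω k - g ω k))
          =ᵐ[μ] fun ω => v ω i * (x ω k - (μ[fun ω => x ω k|mG]) ω) := by
        filter_upwards [hcomp k] with ω hω
        rw [hω]
      rw [integral_congr_ae hcongr]
      exact aux_orth hmG hvi_sm (hvk2 i) (hxk2 k)
    have hvie0 : ∀ i j, ∫ ω, v ω i * e ω j ∂μ = 0 := by
      intro i j
      have h1 : (fun ω => v ω i * e ω j)
          = fun ω => ∑ k, K j k * (v ω i * (x ω k - g ω k)) := by
        funext ω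
        simp only [he_def, Matrix.mulVec, dotProduct, Finset.mul_sum, Pi.sub_apply]
        exact Finset.sum_congr rfl fun k _ => by ring
      have hti : ∀ k, Integrable (fun ω => K j k * (v ω i * (x ω k - g ω k))) μ :=
        fun k => (aux_int_mul (hvk2 i) ((hxk2 k).sub (hgk2 k))).const_mul _
      rw [h1, integral_finset_sum _ fun k _ => hti k]
      refine Finset.sum_eq_zero fun k _ => ?_
      rw [integral_const_mul, hcross0 i k, mul_zero]
    have hcint0 : ∫ ω, v ω ⬝ᵥ M *ᵥ e ω ∂μ = 0 := by
      have h1 : (fun ω => v ω ⬝ᵥ M *ᵥ e ω)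
          = fun ω => ∑ i, ∑ j, M i j * (v ω i * e ω j) := by
        funext ω
        simp only [dotProduct, Matrix.mulVec, Finset.mul_sum]
        exact Finset.sum_congr rfl fun i _ => Finset.sum_congr rfl fun j _ => by ring
      have hti : ∀ i j, Integrable (fun ω => M i j * (v ω i * e ω j)) μ :=
        fun i j => (aux_int_mul (hvk2 i) (hek2 j)).const_mul _
      rw [h1, integral_finset_sum _ fun i _ => integrable_finset_sum _ fun j _ => hti i j]
      refine Finset.sum_eq_zero fun i _ => ?_
      rw [integral_finset_sum _ fun j _ => hti i j]
      refine Finset.sum_eq_zero fun j _ => ?_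
      rw [integral_const_mul, hvie0 i j, mul_zero]
    -- put it together
    have hmain : ∫ ω, (u ω - K *ᵥ x ω) ⬝ᵥ M *ᵥ (u ω - K *ᵥ x ω) ∂μ
        = (∫ ω, v ω ⬝ᵥ M *ᵥ v ω ∂μ) + ∫ ω, e ω ⬝ᵥ M *ᵥ e ω ∂μ := by
      have h1 : (fun ω => (u ω - K *ᵥ x ω) ⬝ᵥ M *ᵥ (u ω - K *ᵥ x ω))
          = fun ω => v ω ⬝ᵥ M *ᵥ v ω - 2 * (v ω ⬝ᵥ M *ᵥ e ω) + e ω ⬝ᵥ M *ᵥ e ω := by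
        funext ω; exact hexp ω
      have hsplit : ∫ ω, (v ω ⬝ᵥ M *ᵥ v ω - 2 * (v ω ⬝ᵥ M *ᵥ e ω) + e ω ⬝ᵥ M *ᵥ e ω) ∂μ
          = (∫ ω, (v ω ⬝ᵥ M *ᵥ v ω - 2 * (v ω ⬝ᵥ M *ᵥ e ω)) ∂μ)
            + ∫ ω, e ω ⬝ᵥ M *ᵥ e ω ∂μ :=
        integral_add (hQv_int.sub (hc_int.const_mul 2)) hQe_int
      have hsub : ∫ ω, (v ω ⬝ᵥ M *ᵥ v ω - 2 * (v ω ⬝ᵥ M *ᵥ e ω)) ∂μ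
          = (∫ ω, v ω ⬝ᵥ M *ᵥ v ω ∂μ) - ∫ ω, 2 * (v ω ⬝ᵥ M *ᵥ e ω) ∂μ :=
        integral_sub hQv_int (hc_int.const_mul 2)
      have h2c : ∫ ω, 2 * (v ω ⬝ᵥ M *ᵥ e ω) ∂μ = 2 * ∫ ω, v ω ⬝ᵥ M *ᵥ e ω ∂μ :=
        integral_const_mul 2 _
      rw [h1, hsplit, hsub, h2c, hcint0, mul_zero, sub_zero]
    rw [ge_iff_le, hmain]
    have hQv_nonneg : 0 ≤ ∫ ω, v ω ⬝ᵥ M *ᵥ v ω ∂μ :=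
      integral_nonneg fun ω => by simpa using hM.dotProduct_mulVec_nonneg (v ω)
    linarith
  · -- equality at u = K E[x|G]
    refine integral_congr_ae (Filter.Eventually.of_forall fun ω => ?_)
    have h1 : K *ᵥ g ω - K *ᵥ x ω = -(K *ᵥ (x ω - g ω)) := by
      rw [Matrix.mulVec_sub]; abel
    show (K *ᵥ g ω - K *ᵥ x ω) ⬝ᵥ M *ᵥ (K *ᵥ g ω - K *ᵥ x ω)
        = (K *ᵥ (x ω - g ω)) ⬝ᵥ M *ᵥ (K *ᵥ (x ω - g ω))
    rw [h1, neg_dotProduct, Matrix.mulVec_neg, dotProduct_neg, neg_neg]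

end Aux

theorem stmt12 {n m : ℕ} {Ω : Type*} {mΩ : MeasurableSpace Ω}
    (μ : Measure Ω) [IsProbabilityMeasure μ]
    (mG : MeasurableSpace Ω) (hmG : mG ≤ mΩ)
    (x : Ω → Fin n → ℝ) (hx : MemLp x 2 μ)
    (K : Matrix (Fin m) (Fin n) ℝ)
    (M : Matrix (Fin m) (Fin m) ℝ) (hM : M.PosSemidef) :
    (∀ u : Ω → Fin m → ℝ, StronglyMeasurable[mG] u → MemLp u 2 μ →
      ∫ ω, (u ω - K *ᵥ x ω) ⬝ᵥ M *ᵥ (u ω - K *ᵥ x ω) ∂μ ≥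
        ∫ ω, (K *ᵥ (x ω - (μ[x|mG]) ω)) ⬝ᵥ M *ᵥ (K *ᵥ (x ω - (μ[x|mG]) ω)) ∂μ) ∧
    (∫ ω, ((K *ᵥ (μ[x|mG]) ω) - K *ᵥ x ω) ⬝ᵥ M *ᵥ ((K *ᵥ (μ[x|mG]) ω) - K *ᵥ x ω) ∂μ =
      ∫ ω, (K *ᵥ (x ω - (μ[x|mG]) ω)) ⬝ᵥ M *ᵥ (K *ᵥ (x ω - (μ[x|mG]) ω)) ∂μ) :=
  aux_main hmG x hx K M hM
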